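/- Define inductively multilinear forms T_m : (ℝ^{2^{m-1}})^m → ℝ by T₂(x,y) = x₁y₁+x₁y₂+x₂y₁-x₂y₂ and T_m(x⁽¹⁾,...,x⁽ᵐ⁾) = (x₁⁽ᵐ⁾+x₂⁽ᵐ⁾)T_{m-1}(x⁽¹⁾,...,x⁽ᵐ⁻¹⁾) + (x₁⁽ᵐ⁾-x₂⁽ᵐ⁾)T_{m-1}(B^{2^{m-2}}x⁽¹⁾, B^{2^{m-2}}x⁽²⁾, B^{2^{m-3}}x⁽³⁾, ..., B²x⁽ᵐ⁻¹⁾), where B is the backward shift. Then ‖T_m‖ = 2^{m-1}, where the norm is the supremum over the unit ball of (ℓ∞^{2^{m-1}})^m. -/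
import Mathlib


/-- The iterated mixed `ℓ_{q₁}(ℓ_{q₂}(⋯ℓ_{q_m}))` norm of an `m`-indexed array
`f` with indices ranging over `{0, ..., N-1}`:
`(Σ_{j₁<N}(⋯(Σ_{j_m<N}|f(j₁,...,j_m)|^{q_m})^{q_{m-1}/q_m}⋯)^{q₁/q₂})^{1/q₁}`. -/
noncomputable def mixedNorm : (m : ℕ) → (N : ℕ) → (ℕ → ℝ) → ((ℕ → ℕ) → ℝ) → ℝ
  | 0, _, _, f => |f fun _ => 0|
  | m + 1, N, q, f =>
      (∑ j : Fin N, (mixedNorm m N (fun i => q (i + 1))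
          (fun idx => f (fun i => if i = 0 then (j : ℕ) else idx (i - 1)))) ^ q 0)
        ^ (1 / q 0)

/-- The `j`-th canonical basis vector of `ℝⁿ` (interpreted as `0` if `j ≥ n`). -/
def eVec (n : ℕ) (j : ℕ) : Fin n → ℝ := fun i => if (i : ℕ) = j then 1 else 0

/-- The supremum norm of an `m`-linear form on `(ℓ∞ⁿ)^m`. -/
noncomputable def supNorm (m n : ℕ)
    (T : MultilinearMap ℝ (fun _ : Fin m => (Fin n → ℝ)) ℝ) : ℝ :=
  sSup {v : ℝ | ∃ x : Fin m → Fin n → ℝ, (∀ i, ‖x i‖ ≤ 1) ∧ v = |T x|}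

/-- The shift exponents in the inductive definition of `T_m`. -/
def Tshift (m k : ℕ) : ℕ := if k ≤ 1 then 2 ^ (m - 1) else 2 ^ (m - k)

/-- The inductively defined `m`-linear forms `T_m` of Diniz et al.:
`T₂(x,y) = x₁y₁ + x₁y₂ + x₂y₁ - x₂y₂` and
`T_{m+1}(x⁽¹⁾,...,x⁽ᵐ⁺¹⁾) = (x₁⁽ᵐ⁺¹⁾+x₂⁽ᵐ⁺¹⁾)T_m(x⁽¹⁾,...,x⁽ᵐ⁾)
  + (x₁⁽ᵐ⁺¹⁾-x₂⁽ᵐ⁺¹⁾)T_m(B^{2^{m-1}}x⁽¹⁾, B^{2^{m-1}}x⁽²⁾, B^{2^{m-2}}x⁽³⁾, ..., B²x⁽ᵐ⁾)`,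
where `B` is the backward shift. The `k`-th argument (0-indexed) is `x k : ℕ → ℝ`. -/
noncomputable def Tform : ℕ → (ℕ → ℕ → ℝ) → ℝ
  | 0, _ => 0
  | 1, x => x 0 0
  | 2, x => x 0 0 * x 1 0 + x 0 0 * x 1 1 + x 0 1 * x 1 0 - x 0 1 * x 1 1
  | m + 3, x =>
      (x (m + 2) 0 + x (m + 2) 1) * Tform (m + 2) x
        + (x (m + 2) 0 - x (m + 2) 1)
            * Tform (m + 2) (fun k j => x k (j + Tshift (m + 2) k))

lemma comb_bound (a b u v M : ℝ) (ha : |a| ≤ 1) (hb : |b| ≤ 1)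
    (hu : |u| ≤ M) (hv : |v| ≤ M) : |(a + b) * u + (a - b) * v| ≤ 2 * M := by
  have hM : 0 ≤ M := le_trans (abs_nonneg u) hu
  have key : |a + b| + |a - b| ≤ 2 := by
    rw [abs_le] at ha hb
    rcases abs_cases (a + b) with ⟨h1, _⟩ | ⟨h1, _⟩ <;>
      rcases abs_cases (a - b) with ⟨h2, _⟩ | ⟨h2, _⟩ <;> linarith
  calc |(a + b) * u + (a - b) * v| ≤ |(a + b) * u| + |(a - b) * v| := abs_add_le _ _
    _ = |a + b| * |u| + |a - b| * |v| := by rw [abs_mul, abs_mul]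
    _ ≤ |a + b| * M + |a - b| * M := by
        have h1 := mul_le_mul_of_nonneg_left hu (abs_nonneg (a + b))
        have h2 := mul_le_mul_of_nonneg_left hv (abs_nonneg (a - b))
        linarith
    _ = (|a + b| + |a - b|) * M := by ring
    _ ≤ 2 * M := mul_le_mul_of_nonneg_right key hM

lemma Tform_bound : ∀ m (x : ℕ → ℕ → ℝ), (∀ k j, |x k j| ≤ 1) →
    |Tform m x| ≤ 2 ^ (m - 1) := by
  intro m
  induction m using Nat.strong_induction_on with
  | _ m ih =>
    match m with
    | 0 => intro x hx; simp [Tform]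
    | 1 => intro x hx; simpa [Tform] using hx 0 0
    | 2 =>
      intro x hx
      have h : Tform 2 x = (x 0 0 + x 0 1) * x 1 0 + (x 0 0 - x 0 1) * x 1 1 := by
        simp [Tform]; ring
      rw [h]
      have := comb_bound (x 0 0) (x 0 1) (x 1 0) (x 1 1) 1 (hx 0 0) (hx 0 1)
        (hx 1 0) (hx 1 1)
      norm_num at this ⊢
      exact this
    | m + 3 =>
      intro x hx
      have h1 : |Tform (m + 2) x| ≤ 2 ^ (m + 1) := by
        simpa using ih (m + 2) (by omega) x hx
      have h2 : |Tform (m + 2) (fun k j => x k (j + Tshift (m + 2) k))| ≤ 2 ^ (m + 1) := by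
        simpa using ih (m + 2) (by omega) _ (fun k j => hx k _)
      have := comb_bound (x (m + 2) 0) (x (m + 2) 1) (Tform (m + 2) x)
        (Tform (m + 2) (fun k j => x k (j + Tshift (m + 2) k))) (2 ^ (m + 1))
        (hx _ 0) (hx _ 1) h1 h2
      calc |Tform (m + 3) x| ≤ 2 * 2 ^ (m + 1) := this
        _ = 2 ^ (m + 3 - 1) := by rw [show m + 3 - 1 = m + 2 from rfl, pow_succ]; ring

lemma Tform_ones : ∀ m, 2 ≤ m → Tform m (fun _ _ => (1 : ℝ)) = 2 ^ (m - 1) := by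
  intro m
  induction m using Nat.strong_induction_on with
  | _ m ih =>
    match m with
    | 0 => intro h; omega
    | 1 => intro h; omega
    | 2 => intro _; norm_num [Tform]
    | m + 3 =>
      intro _
      have h := ih (m + 2) (by omega) (by omega)
      simp only [Tform] at h ⊢
      rw [show (fun (k j : ℕ) => (1:ℝ)) = (fun (k j : ℕ) => (1:ℝ)) from rfl]
      norm_num
      rw [h, show m + 2 - 1 = m + 1 from rfl, pow_succ]
      ring

/-- The supremum norm of `T_m` over the unit ball of `(ℓ∞)^m` equals `2^{m-1}`. -/
theorem stmt_6 (m : ℕ) (hm : 2 ≤ m) :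
    sSup {v : ℝ | ∃ x : ℕ → ℕ → ℝ, (∀ k j, |x k j| ≤ 1) ∧ v = |Tform m x|}
      = 2 ^ (m - 1) := by
  have hones : (2:ℝ) ^ (m-1) ∈ {v : ℝ | ∃ x : ℕ → ℕ → ℝ, (∀ k j, |x k j| ≤ 1) ∧ v = |Tform m x|} := by
    refine ⟨fun _ _ => 1, fun k j => by norm_num, ?_⟩
    rw [Tform_ones m hm, abs_of_pos (by positivity)]
  apply le_antisymm
  · apply csSup_le ⟨_, hones⟩
    rintro v ⟨x, hx, rfl⟩
    exact Tform_bound m x hx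
  · exact le_csSup ⟨_, by rintro v ⟨x, hx, rfl⟩; exact Tform_bound m x hx⟩ hones
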